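/- arXiv:dg-ga/9612016 — 2 statements merged into one kernel-verified Lean document; each statement's English description precedes it below -/
import Mathlib

section
/- Let R be a commutative ring containing ℚ, and let α, β, γ ∈ R. Define the formal power series c(t) = exp[αt + Σ_{n≥2} (αβ^{n-1} + 2γβ^{n-2}) t^{2n-1}/(2n-1) + Σ_{n≥1} β^n t^{2n}/(2n)] in R[[t]]. Then c(t) satisfies the differential equation (1 - βt²)·c'(t) = (α + βt + 2γt²)·c(t). -/
open Finset PowerSeries

section Aux

variable {R : Type*} [CommRing R]


lemma coeff_pow_zero_of_lt (f : PowerSeries R) (hf : constantCoeff f = 0)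
    {m n : ℕ} (h : n < m) : coeff n (f ^ m) = 0 :=
  (X_pow_dvd_iff.mp (pow_dvd_pow_of_dvd (X_dvd_iff.mpr hf) m)) n h

lemma coeff_derivativeFun' (f : PowerSeries R) (n : ℕ) :
    coeff n (derivativeFun f) = coeff (n + 1) f * (n + 1) :=
  coeff_derivative f n

lemma derivativeFun_pow_succ (f : PowerSeries R) (m : ℕ) :
    derivativeFun (f ^ (m + 1)) = (m + 1) • (f ^ m * derivativeFun f) := by
  induction m with
  | zero => simp
  | succ m ih =>
    rw [pow_succ, derivativeFun_mul, ih, pow_succ]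
    simp only [nsmul_eq_mul, smul_eq_mul, Nat.cast_add, Nat.cast_one]
    ring

lemma exp_ode [Algebra ℚ R] (E : PowerSeries R) (hE : constantCoeff E = 0)
    (c : PowerSeries R)
    (hc : c = PowerSeries.mk fun n =>
      ∑ m ∈ range (n + 1), ((Nat.factorial m : ℚ)⁻¹) • (coeff n (E ^ m))) :
    derivativeFun c = derivativeFun E * c := by
  ext n
  rw [coeff_derivativeFun', coeff_mul]
  have key : ∀ m : ℕ, coeff n (E ^ m * derivativeFun E)
      = (((m : ℚ) + 1))⁻¹ • (coeff (n + 1) (E ^ (m + 1)) * ((n : R) + 1)) := by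
    intro m
    have h1 := congrArg (coeff n) (derivativeFun_pow_succ E m)
    rw [map_nsmul, coeff_derivativeFun'] at h1
    rw [← Nat.cast_smul_eq_nsmul ℚ] at h1
    rw [h1, smul_smul]
    push_cast
    rw [inv_mul_cancel₀ (by positivity), one_smul]
  have hR : ∑ p ∈ antidiagonal n, coeff p.1 (derivativeFun E) * coeff p.2 c
      = ∑ m ∈ range (n + 2),
          ((Nat.factorial (m + 1) : ℚ)⁻¹) • (coeff (n + 1) (E ^ (m + 1)) * ((n : R) + 1)) := by
    calc ∑ p ∈ antidiagonal n, coeff p.1 (derivativeFun E) * coeff p.2 c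
        = ∑ p ∈ antidiagonal n, coeff p.1 (derivativeFun E) *
            ∑ m ∈ range (n + 2), ((Nat.factorial m : ℚ)⁻¹) • coeff p.2 (E ^ m) := by
          refine sum_congr rfl fun p hp => ?_
          congr 1
          rw [hc, coeff_mk]
          refine sum_subset (range_subset_range.mpr ?_) fun m _ hm => ?_
          · have := HasAntidiagonal.antidiagonal.snd_le hp; omega
          · rw [coeff_pow_zero_of_lt E hE (by simp at hm ⊢; omega), smul_zero]
      _ = ∑ m ∈ range (n + 2), ((Nat.factorial m : ℚ)⁻¹) •
            coeff n (derivativeFun E * E ^ m) := by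
          simp only [mul_sum, mul_smul_comm]
          rw [sum_comm]
          exact sum_congr rfl fun m _ => by rw [coeff_mul, smul_sum]
      _ = _ := by
          refine sum_congr rfl fun m _ => ?_
          rw [mul_comm, key m, smul_smul, Nat.factorial_succ]
          push_cast
          rw [mul_inv, mul_comm ((m:ℚ)+1)⁻¹]
  rw [hR, hc, coeff_mk, sum_mul]
  simp only [smul_mul_assoc]
  rw [Finset.sum_range_succ' (fun m => (((Nat.factorial m : ℚ))⁻¹) •
    (coeff (n+1) (E ^ m) * ((n:R)+1))) (n+1)]
  conv_rhs => rw [Finset.sum_range_succ]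
  rw [coeff_pow_zero_of_lt E hE (show n + 1 < n + 1 + 1 by omega)]
  simp

lemma smul_cancel_nat [Algebra ℚ R] {k : ℕ} (hk : k ≠ 0) (x : R) :
    ((k : ℚ)⁻¹ • x) * ((k : ℕ) : R) = x := by
  rw [smul_mul_assoc, mul_comm, ← nsmul_eq_mul, ← Nat.cast_smul_eq_nsmul ℚ, smul_smul,
    inv_mul_cancel₀ (by exact_mod_cast hk), one_smul]

lemma part_B_ode [Algebra ℚ R] (α β γ : R) (E : PowerSeries R)
    (hEdef : E = PowerSeries.mk fun k =>
      if k = 0 then (0:R)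
      else if k = 1 then α
      else if k % 2 = 1 then
        ((k : ℚ)⁻¹) • (α * β ^ ((k - 1) / 2) + 2 * γ * β ^ ((k - 1) / 2 - 1))
      else ((k : ℚ)⁻¹) • β ^ (k / 2)) :
    (1 - PowerSeries.C β * PowerSeries.X ^ 2) * PowerSeries.derivativeFun E =
      PowerSeries.C α + PowerSeries.C β * PowerSeries.X
        + 2 * PowerSeries.C γ * PowerSeries.X ^ 2 := by
  have hD : ∀ n : ℕ, coeff n (derivativeFun E) =
      if n = 0 then α
      else if n % 2 = 1 then β ^ ((n + 1) / 2)
      else α * β ^ (n / 2) + 2 * γ * β ^ (n / 2 - 1) := by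
    intro n
    rw [coeff_derivativeFun', show ((n : R) + 1) = ((n + 1 : ℕ) : R) by push_cast; ring,
      hEdef, coeff_mk]
    rcases Nat.eq_zero_or_pos n with rfl | hn
    · norm_num
    rcases Nat.even_or_odd n with he | ho
    · have hm : n % 2 = 0 := Nat.even_iff.mp he
      have h1 : (n + 1) % 2 = 1 := by omega
      rw [if_neg (by omega), if_neg (by omega), if_pos h1, smul_cancel_nat (by omega)]
      rw [if_neg (by omega : ¬ n = 0), if_neg (by omega : ¬ n % 2 = 1)]
      simp [Nat.add_sub_cancel]
    · have hm : n % 2 = 1 := Nat.odd_iff.mp ho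
      rw [if_neg (by omega), if_neg (by omega), if_neg (by omega : ¬ (n+1) % 2 = 1),
        smul_cancel_nat (by omega), if_neg (by omega), if_pos (by omega : n % 2 = 1)]
  have h2 : ∀ k : ℕ, coeff k ((2 : PowerSeries R) * C γ * X ^ 2) = if k = 2 then 2 * γ else 0 := by
    intro k
    rw [show (2 : PowerSeries R) * C γ = C (2 * γ) by rw [map_mul, map_ofNat],
      coeff_C_mul_X_pow]
  ext n
  rw [sub_mul, one_mul, map_sub, mul_assoc, coeff_C_mul, coeff_X_pow_mul']
  simp only [map_add, coeff_C_mul, coeff_C, coeff_X, h2]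
  rcases lt_or_ge n 4 with h4 | h4
  · interval_cases n <;> simp [hD] <;> ring
  · simp only [hD, if_pos (show 2 ≤ n by omega), if_neg (show ¬ n = 0 by omega),
      if_neg (show ¬ n - 2 = 0 by omega), if_neg (show ¬ n = 1 by omega),
      if_neg (show ¬ n = 2 by omega), mul_zero, add_zero, zero_add]
    rcases Nat.even_or_odd n with he | ho
    · have hm : n % 2 = 0 := Nat.even_iff.mp he
      rw [if_neg (show ¬ n % 2 = 1 by omega), if_neg (show ¬ (n - 2) % 2 = 1 by omega)]
      rw [show n / 2 - 1 = ((n - 2) / 2 - 1) + 1 by omega,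
        show n / 2 = (n - 2) / 2 + 1 by omega, pow_succ, pow_succ]
      ring
    · have hm : n % 2 = 1 := Nat.odd_iff.mp ho
      rw [if_pos (show n % 2 = 1 by omega), if_pos (show (n - 2) % 2 = 1 by omega),
        show (n + 1) / 2 = ((n - 2) + 1) / 2 + 1 by omega, pow_succ]
      ring

end Aux

/-- Let `R` be a commutative ring containing `ℚ` and `α β γ ∈ R`.  The formal power series
`c(t) = exp[αt + Σ_{n≥2}(αβ^{n-1} + 2γβ^{n-2}) t^{2n-1}/(2n-1) + Σ_{n≥1} β^n t^{2n}/(2n)]`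
(whose coefficients are computed from the exponential of the exponent series `E`, namely
`c_n = Σ_m coeff_n(E^m)/m!`) satisfies the differential equation
`(1 - βt²)·c'(t) = (α + βt + 2γt²)·c(t)`. -/
theorem chern_generating_function_ODE (R : Type*) [CommRing R] [Algebra ℚ R] (α β γ : R) :
    let E : PowerSeries R := PowerSeries.mk fun k =>
      if k = 0 then 0
      else if k = 1 then α
      else if k % 2 = 1 then
        ((k : ℚ)⁻¹) • (α * β ^ ((k - 1) / 2) + 2 * γ * β ^ ((k - 1) / 2 - 1))
      else ((k : ℚ)⁻¹) • β ^ (k / 2)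
    let c : PowerSeries R := PowerSeries.mk fun n =>
      ∑ m ∈ range (n + 1), ((Nat.factorial m : ℚ)⁻¹) • (PowerSeries.coeff n (E ^ m))
    (1 - PowerSeries.C β * PowerSeries.X ^ 2) * PowerSeries.derivativeFun c =
      (PowerSeries.C α + PowerSeries.C β * PowerSeries.X
        + 2 * PowerSeries.C γ * PowerSeries.X ^ 2) * c := by
  intro E c
  have hEdef : E = PowerSeries.mk fun k =>
      if k = 0 then (0:R)
      else if k = 1 then α
      else if k % 2 = 1 then
        ((k : ℚ)⁻¹) • (α * β ^ ((k - 1) / 2) + 2 * γ * β ^ ((k - 1) / 2 - 1))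
      else ((k : ℚ)⁻¹) • β ^ (k / 2) := rfl
  have hE0 : constantCoeff E = 0 := by
    rw [← coeff_zero_eq_constantCoeff_apply, hEdef, coeff_mk]
    simp
  have hA := exp_ode E hE0 c rfl
  have hB := part_B_ode α β γ E hEdef
  rw [hA, ← mul_assoc, hB]
end

section
/- For each integer g ≥ 2, the rational number (2/g)·C(4g-3, 2g-1) is a positive integer. -/
/-- For each integer `g ≥ 2`, the rational number `(2/g)·C(4g-3, 2g-1)` (the quaternionic
volume `υ(G_g)` of the real Grassmannian `G_g`) is a positive integer. -/
theorem quaternionic_volume_integral (g : ℕ) (hg : 2 ≤ g) :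
    ∃ m : ℕ, 0 < m ∧ (m : ℚ) = 2 / g * Nat.choose (4 * g - 3) (2 * g - 1) := by
  obtain ⟨k, rfl⟩ : ∃ k, g = k + 2 := ⟨g - 2, by omega⟩
  have hpos : 0 < catalan (2 * k + 3) := by
    rcases Nat.eq_zero_or_pos (catalan (2 * k + 3)) with h | h
    · have h' := succ_mul_catalan_eq_centralBinom (2 * k + 3)
      rw [h, mul_zero] at h'
      exact absurd h'.symm (Nat.centralBinom_pos _).ne'
    · exact h
  refine ⟨2 * catalan (2 * k + 3), by positivity, ?_⟩
  have h1 : 4 * (k + 2) - 3 = 4 * k + 5 := by omega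
  have h2 : 2 * (k + 2) - 1 = 2 * k + 3 := by omega
  rw [h1, h2]
  have key : (2 * k + 4) * catalan (2 * k + 3) = 2 * Nat.choose (4 * k + 5) (2 * k + 3) := by
    have hb : Nat.centralBinom (2 * k + 3) = 2 * Nat.choose (4 * k + 5) (2 * k + 3) := by
      rw [Nat.centralBinom]
      have h3 : 2 * (2 * k + 3) = (4 * k + 5) + 1 := by ring
      rw [h3, Nat.choose_succ_succ' (4 * k + 5) (2 * k + 2)]
      have hs : Nat.choose (4 * k + 5) (2 * k + 2) = Nat.choose (4 * k + 5) (2 * k + 3) :=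
        Nat.choose_symm_of_eq_add (by ring)
      have h4 : 2 * k + 2 + 1 = 2 * k + 3 := by ring
      rw [h4, hs]
      ring
    rw [show 2 * k + 4 = 2 * k + 3 + 1 from by ring, ← hb]
    exact succ_mul_catalan_eq_centralBinom (2 * k + 3)
  have hk : ((k : ℚ) + 2) ≠ 0 := by positivity
  field_simp
  have keyQ := congrArg (Nat.cast : ℕ → ℚ) key
  push_cast at keyQ
  push_cast
  linear_combination keyQ
end
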